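/- Let k be a field, V a finite-dimensional k-vector space with n = dim_k V, and f, g ∈ End_k(V). Let D_f and D_g be endomorphisms of the exterior square ⋀²V satisfying D_f(x ∧ y) = f(x) ∧ y + x ∧ f(y) and D_g(x ∧ y) = g(x) ∧ y + x ∧ g(y) for all x, y ∈ V. Then tr(D_f ∘ D_g) = (n − 2)·tr(f ∘ g) + tr(f)·tr(g). -/

import Mathlib

namespace SmallRep

/-- The elementary wedge `x ∧ y` as an element of the exterior square `⋀[k]^2 V`. -/
noncomputable def wedge (k : Type*) {V : Type*} [CommRing k] [AddCommGroup V] [Module k V]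
    (x y : V) : ⋀[k]^2 V :=
  ⟨ExteriorAlgebra.ιMulti k 2 ![x, y],
    ExteriorAlgebra.ιMulti_range k 2 (Set.mem_range_self _)⟩

section CR
variable (k : Type*) {V : Type*} [CommRing k] [AddCommGroup V] [Module k V]

lemma update0 (x y z : V) : Function.update ![x, y] 0 z = ![z, y] := by
  funext i; fin_cases i <;> simp

lemma update1 (x y z : V) : Function.update ![x, y] 1 z = ![x, z] := by
  funext i; fin_cases i <;> simp

lemma wedge_add_left (x x' y : V) :
    wedge k (x + x') y = wedge k x y + wedge k x' y := by
  apply Subtype.ext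
  show ExteriorAlgebra.ιMulti k 2 ![x + x', y] =
    ExteriorAlgebra.ιMulti k 2 ![x, y] + ExteriorAlgebra.ιMulti k 2 ![x', y]
  rw [← update0 x y (x + x'), ← update0 x y x, ← update0 x y x']
  exact (ExteriorAlgebra.ιMulti k 2).map_update_add _ 0 x x'

lemma wedge_smul_left (c : k) (x y : V) :
    wedge k (c • x) y = c • wedge k x y := by
  apply Subtype.ext
  show ExteriorAlgebra.ιMulti k 2 ![c • x, y] = c • ExteriorAlgebra.ιMulti k 2 ![x, y]
  rw [← update0 x y (c • x), ← update0 x y x]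
  exact (ExteriorAlgebra.ιMulti k 2).map_update_smul _ 0 c x

lemma wedge_add_right (x y y' : V) :
    wedge k x (y + y') = wedge k x y + wedge k x y' := by
  apply Subtype.ext
  show ExteriorAlgebra.ιMulti k 2 ![x, y + y'] =
    ExteriorAlgebra.ιMulti k 2 ![x, y] + ExteriorAlgebra.ιMulti k 2 ![x, y']
  rw [← update1 x y (y + y'), ← update1 x y y, ← update1 x y y']
  exact (ExteriorAlgebra.ιMulti k 2).map_update_add _ 1 y y'

lemma wedge_smul_right (c : k) (x y : V) :
    wedge k x (c • y) = c • wedge k x y := by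
  apply Subtype.ext
  show ExteriorAlgebra.ιMulti k 2 ![x, c • y] = c • ExteriorAlgebra.ιMulti k 2 ![x, y]
  rw [← update1 x y (c • y), ← update1 x y y]
  exact (ExteriorAlgebra.ιMulti k 2).map_update_smul _ 1 c y

lemma wedge_self (x : V) : wedge k x x = 0 := by
  apply Subtype.ext
  show ExteriorAlgebra.ιMulti k 2 ![x, x] = 0
  exact (ExteriorAlgebra.ιMulti k 2).map_eq_zero_of_eq ![x,x] (i := 0) (j := 1)
    rfl (by decide)

lemma wedge_antisymm (x y : V) : wedge k y x = - wedge k x y := by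
  have hs := wedge_self k (x + y)
  rw [wedge_add_left, wedge_add_right, wedge_add_right, wedge_self, wedge_self] at hs
  linear_combination (norm := abel_nf) hs

/-- wedge as a bilinear map -/
noncomputable def W2 : V →ₗ[k] V →ₗ[k] ⋀[k]^2 V :=
  LinearMap.mk₂ k (wedge k) (wedge_add_left k) (wedge_smul_left k)
    (wedge_add_right k) (wedge_smul_right k)

@[simp] lemma W2_apply (x y : V) : W2 k x y = wedge k x y := rfl

noncomputable def phi (c₁ c₂ : V →ₗ[k] k) : (⋀[k]^2 V) →ₗ[k] k :=
  (ExteriorAlgebra.liftAlternating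
      (Function.update (fun i => (0 : V [⋀^Fin i]→ₗ[k] k)) 2
        ((Matrix.detRowAlternating).compLinearMap (LinearMap.pi ![c₁, c₂])))) ∘ₗ
    (⋀[k]^2 V).subtype

lemma phi_wedge (c₁ c₂ : V →ₗ[k] k) (x y : V) :
    phi k c₁ c₂ (wedge k x y) = c₁ x * c₂ y - c₂ x * c₁ y := by
  show ExteriorAlgebra.liftAlternating _ (ExteriorAlgebra.ιMulti k 2 ![x, y]) = _
  rw [ExteriorAlgebra.liftAlternating_apply_ιMulti, Function.update_self]
  show Matrix.detRowAlternating (fun t => LinearMap.pi ![c₁, c₂] (![x, y] t)) = _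
  rw [Matrix.detRowAlternating]
  show Matrix.det (Matrix.of fun t s => (![c₁, c₂] s) (![x, y] t)) = _
  rw [Matrix.det_fin_two]
  simp

end CR

section Module.Basis

variable {k V : Type*} [Field k] [AddCommGroup V] [Module k V] [FiniteDimensional k V]

variable {ι : Type*} [Fintype ι] [LinearOrder ι] (b : Module.Basis ι k V)

/-- index type for the wedge basis -/
abbrev P (ι : Type*) [LinearOrder ι] := {p : ι × ι // p.1 < p.2}

noncomputable def wb : P ι → ⋀[k]^2 V := fun p => wedge k (b p.1.1) (b p.1.2)

lemma span_wb : ⊤ ≤ Submodule.span k (Set.range (wb b)) := by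
  set T := Submodule.span k (Set.range (wb b)) with hT
  -- first: every wedge of basis vectors is in T
  have hbb : ∀ i j : ι, wedge k (b i) (b j) ∈ T := by
    intro i j
    rcases lt_trichotomy i j with h | h | h
    · exact Submodule.subset_span ⟨⟨(i, j), h⟩, rfl⟩
    · rw [h, wedge_self]; exact T.zero_mem
    · rw [wedge_antisymm]
      exact T.neg_mem (Submodule.subset_span ⟨⟨(j, i), h⟩, rfl⟩)
  have hb : ∀ x y : V, wedge k x y ∈ T := by
    have hsp : ∀ z : V, z ∈ Submodule.span k (Set.range b) := by
      intro z; rw [b.span_eq]; trivial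
    intro x y
    induction hsp x using Submodule.span_induction with
    | mem x hx =>
      obtain ⟨i, rfl⟩ := hx
      induction hsp y using Submodule.span_induction with
      | mem y hy => obtain ⟨j, rfl⟩ := hy; exact hbb i j
      | zero => rw [show wedge k (b i) (0:V) = 0 from (W2 k (b i)).map_zero]; exact T.zero_mem
      | add u v _ _ hu hv => rw [wedge_add_right]; exact T.add_mem hu hv
      | smul c u _ hu => rw [wedge_smul_right]; exact T.smul_mem c hu
    | zero => rw [show wedge k (0:V) y = 0 from LinearMap.congr_fun ((W2 k).map_zero) y]
              exact T.zero_mem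
    | add u v _ _ hu hv => rw [wedge_add_left]; exact T.add_mem hu hv
    | smul c u _ hu => rw [wedge_smul_left]; exact T.smul_mem c hu
  -- now: the subtype image
  intro u _
  have hval : (u : ExteriorAlgebra k V) ∈
      Submodule.span k (Set.range (ExteriorAlgebra.ιMulti k 2 (M := V))) := by
    rw [ExteriorAlgebra.ιMulti_span_fixedDegree]; exact u.2
  -- map T through the subtype
  have hmap : Submodule.map (⋀[k]^2 V).subtype T =
      Submodule.span k (Subtype.val '' (Set.range (wb b))) := by
    rw [hT, Submodule.map_span]; rfl
  have hiM : Set.range (ExteriorAlgebra.ιMulti k 2 (M := V)) ⊆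
      (Submodule.span k (Subtype.val '' (Set.range (wb b))) : Set (ExteriorAlgebra k V)) := by
    rintro _ ⟨v, rfl⟩
    have hv : v = ![v 0, v 1] := by funext t; fin_cases t <;> rfl
    rw [hv]
    have := hb (v 0) (v 1)
    have := hmap ▸ Submodule.mem_map_of_mem (f := (⋀[k]^2 V).subtype) this
    exact this
  have : (u : ExteriorAlgebra k V) ∈ Submodule.map (⋀[k]^2 V).subtype T := by
    rw [hmap]
    exact Submodule.span_le.mpr hiM hval
  obtain ⟨t, ht, htv⟩ := this
  have : t = u := Subtype.ext htv
  exact this ▸ ht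

lemma phi_wb (p q : P ι) :
    phi k (b.coord q.1.1) (b.coord q.1.2) (wb b p) = if p = q then 1 else 0 := by
  classical
  rcases p with ⟨⟨a, c⟩, hac⟩; rcases q with ⟨⟨a', c'⟩, hac'⟩
  simp only [wb, phi_wedge, Module.Basis.coord_apply, Module.Basis.repr_self, Finsupp.single_apply,
    Subtype.mk_eq_mk, Prod.mk.injEq]
  have hac2 : a < c := hac
  have hac2' : a' < c' := hac'
  have hne : a ≠ c := ne_of_lt hac2
  have hne' : a' ≠ c' := ne_of_lt hac2'
  have hcross : ¬(a = c' ∧ c = a') := by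
    rintro ⟨rfl, rfl⟩
    exact absurd (hac2.trans hac2') (lt_irrefl _)
  by_cases h1 : a = a' <;> by_cases h2 : c = c' <;> by_cases h3 : a = c' <;>
    by_cases h4 : c = a' <;> simp_all <;> ring

lemma indep : LinearIndependent k (wb b) := by
  classical
  rw [Fintype.linearIndependent_iff]
  intro g hg q
  have h := congrArg (phi k (b.coord q.1.1) (b.coord q.1.2)) hg
  simpa [map_sum, phi_wb, mul_ite, Finset.sum_ite_eq'] using h

noncomputable def wbasis : Module.Basis (P ι) k (⋀[k]^2 V) := Module.Basis.mk (indep b) (span_wb b)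

lemma wbasis_apply (p : P ι) : wbasis b p = wb b p := Module.Basis.mk_apply _ _ _

lemma wbasis_repr (x : ⋀[k]^2 V) (q : P ι) :
    (wbasis b).repr x q = phi k (b.coord q.1.1) (b.coord q.1.2) x := by
  classical
  have h : (wbasis b).coord q = phi k (b.coord q.1.1) (b.coord q.1.2) := by
    refine Module.Basis.ext (wbasis b) fun p => ?_
    rw [Module.Basis.coord_apply, Module.Basis.repr_self, Finsupp.single_apply, wbasis_apply, phi_wb]
  exact DFunLike.congr_fun h x

lemma trace_eq_sum (T : Module.End k (⋀[k]^2 V)) :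
    LinearMap.trace k (⋀[k]^2 V) T =
      ∑ q : P ι, phi k (b.coord q.1.1) (b.coord q.1.2) (T (wb b q)) := by
  classical
  rw [LinearMap.trace_eq_matrix_trace k (wbasis b) T, Matrix.trace]
  refine Finset.sum_congr rfl fun q _ => ?_
  rw [Matrix.diag_apply, LinearMap.toMatrix_apply, wbasis_repr, wbasis_apply]

end Module.Basis


open Finset in
lemma sum_pairs {k : Type*} [Field k] {ι : Type*} [Fintype ι] [LinearOrder ι]
    (h : ι → ι → k) :
    ∑ p : {p : ι × ι // p.1 < p.2}, (h p.1.1 p.1.2 + h p.1.2 p.1.1) =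
      (∑ i, ∑ j, h i j) - ∑ i, h i i := by
  classical
  have h1 : ∑ p : {p : ι × ι // p.1 < p.2}, (h p.1.1 p.1.2 + h p.1.2 p.1.1) =
      ∑ p ∈ (univ ×ˢ univ).filter (fun p : ι × ι => p.1 < p.2), (h p.1 p.2 + h p.2 p.1) := by
    refine (Finset.sum_subtype ((univ ×ˢ univ).filter (fun p : ι × ι => p.1 < p.2))
      (p := fun p : ι × ι => p.1 < p.2) (fun p => ?_) (fun p => h p.1 p.2 + h p.2 p.1)).symm
    simp
  rw [h1, Finset.sum_add_distrib]
  have h2 : ∑ p ∈ (univ ×ˢ univ).filter (fun p : ι × ι => p.1 < p.2), h p.2 p.1 =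
      ∑ p ∈ (univ ×ˢ univ).filter (fun p : ι × ι => p.2 < p.1), h p.1 p.2 := by
    refine Finset.sum_nbij' (fun p => Prod.swap p) (fun p => Prod.swap p) ?_ ?_ ?_ ?_ ?_ <;>
      simp
  rw [h2, ← Finset.sum_union]
  · have h3 : (univ ×ˢ univ).filter (fun p : ι × ι => p.1 < p.2) ∪
        (univ ×ˢ univ).filter (fun p : ι × ι => p.2 < p.1) = (univ : Finset ι).offDiag := by
      ext p
      simp only [Finset.mem_union, Finset.mem_filter, Finset.mem_offDiag, Finset.mem_product,
        Finset.mem_univ, true_and]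
      constructor
      · rintro (h | h)
        exacts [ne_of_lt h, ne_of_gt h]
      · intro hne
        rcases lt_or_gt_of_ne hne with h | h
        · exact Or.inl h
        · exact Or.inr h
    rw [h3]
    have h4 : ∑ p ∈ (univ : Finset ι).offDiag, h p.1 p.2 =
        (∑ p ∈ (univ ×ˢ univ : Finset (ι × ι)), h p.1 p.2) - ∑ i, h i i := by
      rw [← Finset.diag_union_offDiag, Finset.sum_union (Finset.disjoint_diag_offDiag _),
        Finset.sum_diag]
      ring
    rw [h4, Finset.sum_product]
  · rw [Finset.disjoint_filter]
    intro p _ hlt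
    simp only [not_lt]
    exact le_of_lt hlt


/-- If `D_f` and `D_g` are the derivation-like endomorphisms of `⋀²V` induced by
endomorphisms `f, g` of an `n`-dimensional vector space `V`, then
`tr(D_f ∘ D_g) = (n-2)·tr(f∘g) + tr(f)·tr(g)`. -/
theorem trace_exterior_square_derivation_comp
    (k V : Type*) [Field k] [AddCommGroup V] [Module k V] [FiniteDimensional k V]
    (f g : V →ₗ[k] V) (Df Dg : Module.End k (⋀[k]^2 V))
    (hDf : ∀ x y : V, Df (wedge k x y) = wedge k (f x) y + wedge k x (f y))
    (hDg : ∀ x y : V, Dg (wedge k x y) = wedge k (g x) y + wedge k x (g y)) :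
    LinearMap.trace k (⋀[k]^2 V) (Df ∘ₗ Dg) =
      ((Module.finrank k V : k) - 2) * LinearMap.trace k V (f ∘ₗ g) +
        LinearMap.trace k V f * LinearMap.trace k V g := by
  classical
  set n := Module.finrank k V with hn
  set b : Module.Basis (Fin n) k V := Module.finBasis k V with hb
  set A := LinearMap.toMatrix b b f with hA
  set Bm := LinearMap.toMatrix b b g with hBm
  have hAe : ∀ i j, b.coord i (f (b j)) = A i j := by
    intro i j; rw [Module.Basis.coord_apply, hA, LinearMap.toMatrix_apply]
  have hBe : ∀ i j, b.coord i (g (b j)) = Bm i j := by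
    intro i j; rw [Module.Basis.coord_apply, hBm, LinearMap.toMatrix_apply]
  have hCe : ∀ i j, b.coord i (f (g (b j))) = (A * Bm) i j := by
    intro i j
    rw [Module.Basis.coord_apply, ← LinearMap.toMatrix_comp b b b f g, LinearMap.toMatrix_apply]
    rfl
  have hde : ∀ i j : Fin n, b.coord i (b j) = if j = i then 1 else 0 := by
    intro i j; rw [Module.Basis.coord_apply, Module.Basis.repr_self, Finsupp.single_apply]
  -- the function whose symmetrization gives the diagonal coefficients
  set h : Fin n → Fin n → k :=
    fun i j => (A * Bm) i i + Bm i i * A j j - Bm j i * A i j with hh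
  have key : ∀ q : P (Fin n),
      phi k (b.coord q.1.1) (b.coord q.1.2) ((Df ∘ₗ Dg) (wb b q)) =
        h q.1.1 q.1.2 + h q.1.2 q.1.1 := by
    rintro ⟨⟨i, j⟩, hij⟩
    have hij' : i < j := hij
    have hji : ¬(i = j) := ne_of_lt hij'
    have hij2 : ¬(j = i) := ne_of_gt hij'
    show phi k (b.coord i) (b.coord j) (Df (Dg (wedge k (b i) (b j)))) = _
    rw [hDg, map_add, hDf, hDf, map_add, map_add, map_add]
    rw [phi_wedge, phi_wedge, phi_wedge, phi_wedge]
    rw [hCe, hCe, hCe, hCe, hAe, hAe, hAe, hAe, hBe, hBe, hBe, hBe,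
      hde, hde, hde, hde]
    rw [if_pos rfl, if_pos rfl, if_neg hji, if_neg hij2]
    rw [hh]
    ring
  rw [trace_eq_sum b (Df ∘ₗ Dg)]
  rw [Finset.sum_congr rfl (fun q _ => key q)]
  rw [sum_pairs]
  have hsw : ∑ i, ∑ j, Bm j i * A i j = ∑ i, (A * Bm) i i := by
    have h1 : ∑ i, ∑ j, Bm j i * A i j = Matrix.trace (Bm * A) := by
      rw [Finset.sum_comm, Matrix.trace]
      refine Finset.sum_congr rfl fun j _ => ?_
      rw [Matrix.diag_apply, Matrix.mul_apply]
    rw [h1, Matrix.trace_mul_comm, Matrix.trace]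
    simp [Matrix.diag_apply]
  have hsum1 : ∑ i, ∑ j, h i j =
      (n : k) * (∑ i, (A * Bm) i i) + (∑ i, Bm i i) * (∑ i, A i i) -
        ∑ i, (A * Bm) i i := by
    simp only [hh, Finset.sum_sub_distrib, Finset.sum_add_distrib, Finset.sum_const,
      Finset.card_univ, Fintype.card_fin, nsmul_eq_mul, ← Finset.sum_mul, ← Finset.mul_sum, hsw]
    try ring
  have hsum2 : ∑ i, h i i = ∑ i, (A * Bm) i i := by
    simp only [hh]
    refine Finset.sum_congr rfl fun i _ => ?_
    ring
  rw [hsum1, hsum2,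
    LinearMap.trace_eq_matrix_trace k b (f ∘ₗ g), LinearMap.toMatrix_comp b b b f g,
    LinearMap.trace_eq_matrix_trace k b f, LinearMap.trace_eq_matrix_trace k b g,
    ← hA, ← hBm]
  simp only [Matrix.trace, Matrix.diag_apply]
  ring

end SmallRep
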